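/- Suppose 0 < ρ ≤ 2·10⁻⁶ and n is sufficiently large. Let H be a 3-graph on n vertices with V(H) = X ∪ Z (disjoint) and |Z| = 3|X|. Assume every vertex v ∈ X satisfies: the number of pairs in Z not forming an edge with v is at most ρ·binom(|Z|,2); and every vertex v ∈ Z satisfies: the number of pairs (x,u) ∈ X×Z with {v,x,u} ∉ E(H) is at most ρ|X||Z|. Then H contains a perfect C-tiling. -/

import Mathlib

open Finset

lemma aux_pow5 (k : ℕ) (hk : 100 ≤ k) : (k+1)^5 ≤ 2*k^5 := by
  have e1 : k ≤ k^2 := Nat.le_self_pow (by norm_num) k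
  have e2 : k^2 ≤ k^3 := Nat.pow_le_pow_right (by omega) (by norm_num)
  have e3 : k^3 ≤ k^4 := Nat.pow_le_pow_right (by omega) (by norm_num)
  have e4 : 100 * k^4 ≤ k^5 := by
    have : 100 * k^4 ≤ k * k^4 := Nat.mul_le_mul_right _ hk
    calc 100 * k^4 ≤ k * k^4 := this
      _ = k^5 := by ring
  have e0 : 1 ≤ k^4 := Nat.one_le_pow _ _ (by omega)
  nlinarith [e1, e2, e3, e4, e0]

lemma aux_pow : ∀ m : ℕ, 100 ≤ m → (3*m)^5 < 2^m := by
  intro m hm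
  induction m with
  | zero => omega
  | succ k ih =>
    rcases Nat.lt_or_ge k 100 with hk | hk
    · have hk99 : k = 99 := by omega
      subst hk99; norm_num
    · have h1 := ih hk
      have h2 : (3*(k+1))^5 ≤ 2 * (3*k)^5 := by
        have := aux_pow5 k hk
        calc (3*(k+1))^5 = 243 * (k+1)^5 := by ring
          _ ≤ 243 * (2*k^5) := Nat.mul_le_mul_left _ this
          _ = 2 * (3*k)^5 := by ring
      calc (3*(k+1))^5 ≤ 2 * (3*k)^5 := h2
        _ < 2 * 2^k := by omega
        _ = 2^(k+1) := by ring

lemma card_filter_product {α β : Type*} [DecidableEq α] [DecidableEq β]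
    (A : Finset α) (B : Finset β) (p : α × β → Prop) [DecidablePred p] :
    ((A ×ˢ B).filter p).card = ∑ a ∈ A, (B.filter fun b => p (a,b)).card := by
  rw [Finset.card_filter, Finset.sum_product]
  refine Finset.sum_congr rfl fun a _ => ?_
  rw [Finset.card_filter]

section
set_option linter.unusedSectionVars false
variable {V : Type} [Fintype V] [DecidableEq V]

def DD (E : Finset (Finset V)) (X : Finset V) (x w : V) : ℕ :=
  (((Xᶜ : Finset V).erase w).filter fun u => ({x, w, u} : Finset V) ∉ E).card

lemma DD_eq (E : Finset (Finset V)) (X : Finset V) (x w : V) :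
    DD E X x w = ((Xᶜ : Finset V).filter fun u => u ≠ w ∧ ({x, w, u} : Finset V) ∉ E).card := by
  unfold DD
  congr 1
  rw [← Finset.filter_ne', Finset.filter_filter]

lemma pair_eq_cases {a c p q : V} (h : ({p, q} : Finset V) = {a, c}) (hpq : p ≠ q) :
    (p = a ∧ q = c) ∨ (p = c ∧ q = a) := by
  have hp : p ∈ ({a, c} : Finset V) := by rw [← h]; simp
  have hq : q ∈ ({a, c} : Finset V) := by rw [← h]; simp
  simp only [Finset.mem_insert, Finset.mem_singleton] at hp hq
  rcases hp with rfl | rfl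
  · left
    refine ⟨rfl, ?_⟩
    rcases hq with rfl | rfl
    · exact absurd rfl hpq
    · rfl
  · right
    refine ⟨rfl, ?_⟩
    rcases hq with rfl | rfl
    · rfl
    · exact absurd rfl hpq

lemma sumDx (E : Finset (Finset V)) (X : Finset V) (x : V) :
    ∑ w ∈ (Xᶜ : Finset V), DD E X x w ≤
      2 * ((((Xᶜ : Finset V).powersetCard 2).filter fun p => insert x p ∉ E).card) := by
  classical
  set Z := (Xᶜ : Finset V)
  set A := ((Z ×ˢ Z).filter fun p => p.2 ≠ p.1 ∧ ({x, p.1, p.2} : Finset V) ∉ E) with hA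
  have hcard : A.card = ∑ w ∈ Z, DD E X x w := by
    rw [hA, card_filter_product]
    refine Finset.sum_congr rfl fun w _ => ?_
    rw [DD_eq]
  rw [← hcard]
  apply Finset.card_le_mul_card_image_of_maps_to (f := fun p => ({p.1, p.2} : Finset V))
  · rintro ⟨p1, p2⟩ hp
    simp only [hA, Finset.mem_filter, Finset.mem_product] at hp
    obtain ⟨⟨h1, h2⟩, hne, hbad⟩ := hp
    simp only [Finset.mem_filter, Finset.mem_powersetCard]
    refine ⟨⟨?_, ?_⟩, ?_⟩
    · intro u hu
      simp only [Finset.mem_insert, Finset.mem_singleton] at hu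
      rcases hu with rfl | rfl
      · exact h1
      · exact h2
    · exact Finset.card_pair (Ne.symm hne)
    · exact hbad
  · intro b hb
    simp only [Finset.mem_filter, Finset.mem_powersetCard] at hb
    obtain ⟨⟨-, hb2⟩, -⟩ := hb
    obtain ⟨a, c, hac, rfl⟩ := Finset.card_eq_two.mp hb2
    have : (A.filter fun p => ({p.1, p.2} : Finset V) = {a, c}) ⊆ {(a, c), (c, a)} := by
      rintro ⟨p1, p2⟩ hp
      simp only [Finset.mem_filter, hA, Finset.mem_product] at hp
      obtain ⟨⟨-, hne, -⟩, heq⟩ := hp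
      rcases pair_eq_cases heq (Ne.symm hne) with ⟨rfl, rfl⟩ | ⟨rfl, rfl⟩ <;> simp
    calc (A.filter fun p => ({p.1, p.2} : Finset V) = {a, c}).card
        ≤ ({(a, c), (c, a)} : Finset (V × V)).card := Finset.card_le_card this
      _ ≤ 2 := Finset.card_insert_le _ _ |>.trans (by simp)

lemma sumDz (E : Finset (Finset V)) (X : Finset V) (z : V) :
    ∑ x ∈ X, DD E X x z =
      ((X ×ˢ (Xᶜ : Finset V).erase z).filter fun p => ({z, p.1, p.2} : Finset V) ∉ E).card := by
  rw [card_filter_product]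
  refine Finset.sum_congr rfl fun x _ => ?_
  unfold DD
  congr 1
  apply Finset.filter_congr
  intro u _
  rw [Finset.insert_comm]


lemma greedy (E : Finset (Finset V)) (X : Finset V) (m : ℕ) (hm : X.card = m)
    (hmZ : (Xᶜ : Finset V).card = 3 * m) (hm0 : 0 < m)
    (hheavy : ∀ x ∈ X, 2 * ((Xᶜ : Finset V).filter fun w => m < 10 * DD E X x w).card ≤ m) :
    ∀ S : Finset V, S ⊆ X → ∃ f : V → V, Set.InjOn f ↑S ∧
      (∀ x ∈ S, f x ∈ (Xᶜ : Finset V) ∧ 10 * DD E X x (f x) ≤ m) ∧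
      3 ^ S.card * (∑ z ∈ (Xᶜ : Finset V),
          3 ^ ((S.filter fun y => 4 * DD E X y z ≤ m ∧ f y ≠ z ∧ ({y, f y, z} : Finset V) ∉ E).card))
        ≤ 3 * m * 4 ^ S.card := by
  intro S
  induction S using Finset.induction_on with
  | empty =>
    intro _
    refine ⟨id, by simp, by simp, ?_⟩
    simp [hmZ]
  | @insert x S' hx ih =>
    intro hsub
    have hxX : x ∈ X := hsub (Finset.mem_insert_self _ _)
    have hS'X : S' ⊆ X := (Finset.subset_insert _ _).trans hsub
    obtain ⟨f', hinj', hprop', hpot'⟩ := ih hS'X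
    set Z := (Xᶜ : Finset V) with hZ
    have hS'card : S'.card + 1 ≤ m := by
      have h1 : (insert x S').card = S'.card + 1 := Finset.card_insert_of_notMem hx
      have h2 : (insert x S').card ≤ X.card := Finset.card_le_card hsub
      omega
    set img := S'.image f' with himgdef
    set cand := ((Z \ img).filter fun w => 10 * DD E X x w ≤ m) with hcand
    -- cardinality of cand
    have hcandcard : 3 * m + 2 ≤ 2 * cand.card := by
      have himg : img.card ≤ S'.card := Finset.card_image_le
      have ha : Z.card ≤ (Z \ img).card + img.card := by
        calc Z.card ≤ ((Z \ img) ∪ img).card := Finset.card_le_card (by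
          intro w hw
          by_cases h : w ∈ img
          · exact Finset.mem_union_right _ h
          · exact Finset.mem_union_left _ (Finset.mem_sdiff.mpr ⟨hw, h⟩))
          _ ≤ (Z \ img).card + img.card := Finset.card_union_le _ _
      set hv := Z.filter fun w => m < 10 * DD E X x w with hhv
      have hb : (Z \ img).card ≤ cand.card + hv.card := by
        calc (Z \ img).card ≤ (cand ∪ hv).card := Finset.card_le_card (by
          intro w hw
          by_cases h : w ∈ hv
          · exact Finset.mem_union_right _ h
          · refine Finset.mem_union_left _ ?_
            rw [hcand, Finset.mem_filter]
            refine ⟨hw, ?_⟩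
            rw [hhv, Finset.mem_filter] at h
            push_neg at h
            exact h (Finset.mem_sdiff.mp hw).1)
          _ ≤ cand.card + hv.card := Finset.card_union_le _ _
      have hc := hheavy x hxX
      rw [← hhv] at hc
      omega
    have hcandne : cand.Nonempty := by
      rw [← Finset.card_pos]; omega
    -- weights
    set h' : V → ℕ := fun z =>
      (S'.filter fun y => 4 * DD E X y z ≤ m ∧ f' y ≠ z ∧ ({y, f' y, z} : Finset V) ∉ E).card
      with hh'
    set Sw : V → ℕ := fun w =>
      ∑ z ∈ Z.filter fun z => 4 * DD E X x z ≤ m ∧ w ≠ z ∧ ({x, w, z} : Finset V) ∉ E,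
        3 ^ h' z with hSw
    set Φ : ℕ := ∑ z ∈ Z, 3 ^ h' z with hΦ
    -- key per-z bound
    have key : ∀ z ∈ Z, 4 * ((cand.filter fun w =>
        4 * DD E X x z ≤ m ∧ w ≠ z ∧ ({x, w, z} : Finset V) ∉ E).card) ≤ m := by
      intro z hz
      by_cases hl : 4 * DD E X x z ≤ m
      · have hsub2 : (cand.filter fun w =>
            4 * DD E X x z ≤ m ∧ w ≠ z ∧ ({x, w, z} : Finset V) ∉ E) ⊆
            ((Z.erase z).filter fun u => ({x, z, u} : Finset V) ∉ E) := by
          intro w hw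
          rw [Finset.mem_filter] at hw
          obtain ⟨hwc, -, hwne, hwbad⟩ := hw
          have hwZ : w ∈ Z := by
            rw [hcand, Finset.mem_filter] at hwc
            exact (Finset.mem_sdiff.mp hwc.1).1
          rw [Finset.mem_filter]
          refine ⟨Finset.mem_erase.mpr ⟨hwne, hwZ⟩, ?_⟩
          rwa [Finset.pair_comm z w]
        have hle : (cand.filter fun w =>
            4 * DD E X x z ≤ m ∧ w ≠ z ∧ ({x, w, z} : Finset V) ∉ E).card ≤ DD E X x z := by
          unfold DD
          exact Finset.card_le_card hsub2
        omega
      · have : (cand.filter fun w =>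
            4 * DD E X x z ≤ m ∧ w ≠ z ∧ ({x, w, z} : Finset V) ∉ E) = ∅ := by
          apply Finset.filter_false_of_mem
          intro w _
          tauto
        rw [this]
        simp
    -- averaging
    have havg : 4 * ∑ w ∈ cand, Sw w ≤ m * Φ := by
      have e1 : ∑ w ∈ cand, Sw w = ∑ z ∈ Z, 3 ^ h' z *
          ((cand.filter fun w =>
            4 * DD E X x z ≤ m ∧ w ≠ z ∧ ({x, w, z} : Finset V) ∉ E).card) := by
        calc ∑ w ∈ cand, Sw w
            = ∑ w ∈ cand, ∑ z ∈ Z, if 4 * DD E X x z ≤ m ∧ w ≠ z ∧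
                ({x, w, z} : Finset V) ∉ E then 3 ^ h' z else 0 := by
              refine Finset.sum_congr rfl fun w _ => ?_
              rw [hSw]
              exact (Finset.sum_filter _ _)
          _ = ∑ z ∈ Z, ∑ w ∈ cand, if 4 * DD E X x z ≤ m ∧ w ≠ z ∧
                ({x, w, z} : Finset V) ∉ E then 3 ^ h' z else 0 := Finset.sum_comm
          _ = _ := by
              refine Finset.sum_congr rfl fun z _ => ?_
              rw [← Finset.sum_filter, Finset.sum_const, smul_eq_mul, mul_comm]
      rw [e1, Finset.mul_sum, hΦ, Finset.mul_sum]
      refine Finset.sum_le_sum fun z hz => ?_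
      have := key z hz
      calc 4 * (3 ^ h' z * _) = 3 ^ h' z * (4 * _) := by ring
        _ ≤ 3 ^ h' z * m := Nat.mul_le_mul_left _ (key z hz)
        _ = m * 3 ^ h' z := by ring
    -- choose w₀
    obtain ⟨w₀, hw₀c, hw₀min⟩ := Finset.exists_min_image cand Sw hcandne
    have h6 : 6 * Sw w₀ ≤ Φ := by
      have t1 : cand.card * Sw w₀ ≤ ∑ w ∈ cand, Sw w := by
        have := Finset.card_nsmul_le_sum cand Sw (Sw w₀) (fun w hw => hw₀min w hw)
        simpa [smul_eq_mul] using this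
      have t2 : 4 * (cand.card * Sw w₀) ≤ m * Φ :=
        le_trans (Nat.mul_le_mul_left 4 t1) havg
      have t3 : (3 * m) * (Sw w₀) ≤ 2 * (cand.card * Sw w₀) := by
        calc (3 * m) * Sw w₀ ≤ (2 * cand.card) * Sw w₀ :=
              Nat.mul_le_mul_right _ (by omega)
          _ = 2 * (cand.card * Sw w₀) := by ring
      have t4 : m * (6 * Sw w₀) ≤ m * Φ := by
        calc m * (6 * Sw w₀) = 2 * ((3 * m) * Sw w₀) := by ring
          _ ≤ 2 * (2 * (cand.card * Sw w₀)) := Nat.mul_le_mul_left _ t3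
          _ = 4 * (cand.card * Sw w₀) := by ring
          _ ≤ m * Φ := t2
      exact Nat.le_of_mul_le_mul_left t4 hm0
    -- facts about w₀
    have hw₀ : w₀ ∈ Z ∧ w₀ ∉ img ∧ 10 * DD E X x w₀ ≤ m := by
      rw [hcand, Finset.mem_filter, Finset.mem_sdiff] at hw₀c
      exact ⟨hw₀c.1.1, hw₀c.1.2, hw₀c.2⟩
    set f := Function.update f' x w₀ with hf
    have hfx : f x = w₀ := Function.update_self x w₀ f'
    have hfS' : ∀ y ∈ S', f y = f' y := by
      intro y hy
      exact Function.update_of_ne (by rintro rfl; exact hx hy) _ _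
    refine ⟨f, ?_, ?_, ?_⟩
    · -- injectivity
      intro a ha b hb hab
      simp only [Finset.coe_insert, Set.mem_insert_iff, Finset.mem_coe] at ha hb
      rcases ha with rfl | ha <;> rcases hb with rfl | hb
      · rfl
      · exfalso
        rw [hfx, hfS' b hb] at hab
        exact hw₀.2.1 (hab ▸ Finset.mem_image_of_mem f' hb)
      · exfalso
        rw [hfx, hfS' a ha] at hab
        exact hw₀.2.1 (hab ▸ Finset.mem_image_of_mem f' ha)
      · rw [hfS' a ha, hfS' b hb] at hab
        exact hinj' ha hb hab
    · -- degree props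
      intro y hy
      rcases Finset.mem_insert.mp hy with rfl | hy'
      · rw [hfx]
        exact ⟨hw₀.1, hw₀.2.2⟩
      · rw [hfS' y hy']
        exact hprop' y hy'
    · -- potential
      have hcardins : (insert x S').card = S'.card + 1 := Finset.card_insert_of_notMem hx
      have hstep : ∀ z ∈ Z,
          ((insert x S').filter fun y => 4 * DD E X y z ≤ m ∧ f y ≠ z ∧
            ({y, f y, z} : Finset V) ∉ E).card
          = h' z + (if 4 * DD E X x z ≤ m ∧ w₀ ≠ z ∧ ({x, w₀, z} : Finset V) ∉ E
              then 1 else 0) := by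
        intro z hz
        have hfilt : (S'.filter fun y => 4 * DD E X y z ≤ m ∧ f y ≠ z ∧
            ({y, f y, z} : Finset V) ∉ E)
            = (S'.filter fun y => 4 * DD E X y z ≤ m ∧ f' y ≠ z ∧
            ({y, f' y, z} : Finset V) ∉ E) := by
          apply Finset.filter_congr
          intro y hy
          rw [hfS' y hy]
        rw [Finset.filter_insert]
        by_cases hPx : 4 * DD E X x z ≤ m ∧ f x ≠ z ∧ ({x, f x, z} : Finset V) ∉ E
        · rw [if_pos hPx, Finset.card_insert_of_notMem
            (fun hmem => hx (Finset.mem_of_mem_filter _ hmem)), hfilt]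
          rw [hfx] at hPx
          rw [if_pos hPx, hh']
        · rw [if_neg hPx, hfilt]
          rw [hfx] at hPx
          rw [if_neg hPx]
          simp [hh']
      have hΦnew : ∑ z ∈ Z,
          3 ^ (((insert x S').filter fun y => 4 * DD E X y z ≤ m ∧ f y ≠ z ∧
            ({y, f y, z} : Finset V) ∉ E).card) = Φ + 2 * Sw w₀ := by
        calc ∑ z ∈ Z, 3 ^ (((insert x S').filter fun y => 4 * DD E X y z ≤ m ∧ f y ≠ z ∧
              ({y, f y, z} : Finset V) ∉ E).card)
            = ∑ z ∈ Z, (3 ^ h' z + if 4 * DD E X x z ≤ m ∧ w₀ ≠ z ∧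
                ({x, w₀, z} : Finset V) ∉ E then 2 * 3 ^ h' z else 0) := by
              refine Finset.sum_congr rfl fun z hz => ?_
              rw [hstep z hz]
              split_ifs with hc
              · rw [pow_succ]; ring
              · ring_nf
          _ = Φ + 2 * Sw w₀ := by
              rw [Finset.sum_add_distrib, hΦ, ← Finset.sum_filter, hSw, Finset.mul_sum]
      rw [hΦnew, hcardins]
      calc 3 ^ (S'.card + 1) * (Φ + 2 * Sw w₀)
          = 3 ^ S'.card * (3 * Φ + 6 * Sw w₀) := by ring
        _ ≤ 3 ^ S'.card * (3 * Φ + Φ) := Nat.mul_le_mul_left _ (by omega)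
        _ = 4 * (3 ^ S'.card * Φ) := by ring
        _ ≤ 4 * (3 * m * 4 ^ S'.card) := Nat.mul_le_mul_left _ hpot'
        _ = 3 * m * 4 ^ (S'.card + 1) := by ring


end
theorem stmt13 (ρ : ℝ) (hρ0 : 0 < ρ) (hρ1 : ρ ≤ 2 / 10 ^ 6) :
    ∃ n₀ : ℕ, ∀ (V : Type) (_ : Fintype V) (_ : DecidableEq V)
      (E : Finset (Finset V)), (∀ e ∈ E, e.card = 3) →
      n₀ ≤ Fintype.card V →
      ∀ X : Finset V, (Xᶜ : Finset V).card = 3 * X.card →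
      (∀ v ∈ X, ((((Xᶜ : Finset V).powersetCard 2).filter
          fun p => insert v p ∉ E).card : ℝ) ≤ ρ * ((Xᶜ : Finset V).card.choose 2 : ℝ)) →
      (∀ v ∈ (Xᶜ : Finset V),
        (((X ×ˢ (Xᶜ : Finset V).erase v).filter
          fun p => ({v, p.1, p.2} : Finset V) ∉ E).card : ℝ) ≤
          ρ * X.card * (Xᶜ : Finset V).card) →
      ∃ T : Finset (Finset V),
        (∀ t ∈ T, t.card = 4 ∧ ∃ e₁ ∈ E, ∃ e₂ ∈ E, e₁ ≠ e₂ ∧ e₁ ⊆ t ∧ e₂ ⊆ t) ∧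
        (T : Set (Finset V)).PairwiseDisjoint id ∧
        (∀ v : V, ∃ t ∈ T, v ∈ t) := by
  refine ⟨400, ?_⟩
  intro V iF iD E hE3 hn X hX3 hdegX hdegZ
  set m := X.card with hmdef
  set Z := (Xᶜ : Finset V) with hZdef
  have hZ3 : Z.card = 3 * m := hX3
  have hcardV : m + Z.card = Fintype.card V := Finset.card_add_card_compl X
  have hm100 : 100 ≤ m := by omega
  have hm0 : 0 < m := by omega
  have hmR : (1:ℝ) ≤ (m:ℝ) := by exact_mod_cast Nat.one_le_iff_ne_zero.mpr (by omega)
  -- choose bound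
  have hchoose : (((3*m).choose 2 : ℕ) : ℝ) ≤ 9 * (m:ℝ)^2 := by
    have h1 : (3*m).choose 2 ≤ 9 * m^2 := by
      calc (3*m).choose 2 = 3*m*(3*m-1)/2 := Nat.choose_two_right _
        _ ≤ 3*m*(3*m-1) := Nat.div_le_self _ _
        _ ≤ 3*m*(3*m) := Nat.mul_le_mul_left _ (Nat.sub_le _ _)
        _ = 9*m^2 := by ring
    exact_mod_cast h1
  -- heavy bound for x-side
  have hheavy : ∀ x ∈ X, 2 * ((Z.filter fun w => m < 10 * DD E X x w).card) ≤ m := by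
    intro x hxX
    set hv := Z.filter fun w => m < 10 * DD E X x w with hhv
    set B := ((Z.powersetCard 2).filter fun p => insert x p ∉ E).card with hB
    have h1 : (m+1) * hv.card ≤ 10 * ∑ w ∈ Z, DD E X x w := by
      calc (m+1) * hv.card = ∑ _w ∈ hv, (m+1) := by
            rw [Finset.sum_const, smul_eq_mul, mul_comm]
        _ ≤ ∑ w ∈ hv, 10 * DD E X x w := by
            refine Finset.sum_le_sum fun w hw => ?_
            have := (Finset.mem_filter.mp hw).2
            omega
        _ ≤ ∑ w ∈ Z, 10 * DD E X x w :=
            Finset.sum_le_sum_of_subset (Finset.filter_subset _ _)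
        _ = 10 * ∑ w ∈ Z, DD E X x w := (Finset.mul_sum _ _ _).symm
    have h2 : ∑ w ∈ Z, DD E X x w ≤ 2 * B := sumDx E X x
    have h3 : (B : ℝ) ≤ ρ * ((3*m).choose 2 : ℕ) := by
      have := hdegX x hxX
      rwa [← hB, hZ3] at this
    have h4 : ((m+1) * hv.card : ℝ) ≤ 20 * (ρ * (9 * (m:ℝ)^2)) := by
      have c1 : ((m+1) * hv.card : ℝ) ≤ 10 * (2 * (B:ℝ)) := by
        have : ((m+1) * hv.card : ℕ) ≤ 10 * (2 * B) := le_trans h1 (by omega)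
        exact_mod_cast this
      have c2 : (B:ℝ) ≤ ρ * (9 * (m:ℝ)^2) := by
        calc (B:ℝ) ≤ ρ * ((3*m).choose 2 : ℕ) := h3
          _ ≤ ρ * (9 * (m:ℝ)^2) := by
            exact mul_le_mul_of_nonneg_left hchoose (le_of_lt hρ0)
      nlinarith [c1, c2]
    have h5 : ((m+1) : ℝ) * (2 * hv.card) ≤ ((m+1):ℝ) * m := by
      have hρ9 : 20 * (ρ * (9 * (m:ℝ)^2)) ≤ (m:ℝ)^2 := by nlinarith [sq_nonneg (m:ℝ), hmR]
      nlinarith [h4, hmR]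
    have h6 : (m+1) * (2 * hv.card) ≤ (m+1) * m := by exact_mod_cast h5
    exact Nat.le_of_mul_le_mul_left h6 (by omega)
  -- heavy bound for z-side
  have hheavyZ : ∀ z ∈ Z, 20 * ((X.filter fun x => m < 4 * DD E X x z).card) ≤ m := by
    intro z hzZ
    set hv := X.filter fun x => m < 4 * DD E X x z with hhv
    have h1 : (m+1) * hv.card ≤ 4 * ∑ x ∈ X, DD E X x z := by
      calc (m+1) * hv.card = ∑ _x ∈ hv, (m+1) := by
            rw [Finset.sum_const, smul_eq_mul, mul_comm]
        _ ≤ ∑ x ∈ hv, 4 * DD E X x z := by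
            refine Finset.sum_le_sum fun x hx => ?_
            have := (Finset.mem_filter.mp hx).2
            omega
        _ ≤ ∑ x ∈ X, 4 * DD E X x z :=
            Finset.sum_le_sum_of_subset (Finset.filter_subset _ _)
        _ = 4 * ∑ x ∈ X, DD E X x z := (Finset.mul_sum _ _ _).symm
    have h2 : ((∑ x ∈ X, DD E X x z : ℕ) : ℝ) ≤ ρ * m * (3*m) := by
      rw [sumDz E X z]
      have h := hdegZ z hzZ
      rw [hZ3] at h
      push_cast at h ⊢
      linarith [h]

    have h5 : ((m+1) : ℝ) * (20 * hv.card) ≤ ((m+1):ℝ) * m := by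
      have c1 : ((m+1) * hv.card : ℝ) ≤ 4 * (ρ * m * (3*m)) := by
        have c0 : ((m+1) * hv.card : ℝ) ≤ 4 * ((∑ x ∈ X, DD E X x z : ℕ) : ℝ) := by
          exact_mod_cast h1
        nlinarith [c0, h2]
      nlinarith [c1, hmR, hρ0.le]
    have h6 : (m+1) * (20 * hv.card) ≤ (m+1) * m := by exact_mod_cast h5
    exact Nat.le_of_mul_le_mul_left h6 (by omega)
  -- apply the greedy construction
  obtain ⟨f, hfinj, hfdeg, hfpot⟩ := greedy E X m hmdef.symm hZ3 hm0 hheavy X Finset.Subset.rfl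
  set h : V → ℕ := fun z =>
    (X.filter fun y => 4 * DD E X y z ≤ m ∧ f y ≠ z ∧ ({y, f y, z} : Finset V) ∉ E).card
    with hhdef
  rw [← hmdef] at hfpot
  -- bound on h from the potential
  have hh : ∀ z ∈ Z, 5 * h z ≤ 2 * m := by
    intro z hz
    by_contra hcon
    push_neg at hcon
    have hsingle : 3 ^ (h z) ≤ ∑ z ∈ Z, 3 ^ (h z) :=
      Finset.single_le_sum (f := fun z => 3 ^ (h z)) (fun i _ => Nat.zero_le _) hz
    have hA : 3 ^ m * 3 ^ (h z) ≤ 3 * m * 4 ^ m :=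
      le_trans (Nat.mul_le_mul_left _ hsingle) hfpot
    have hA' : 3 ^ (m + h z) ≤ 3 * m * 4 ^ m := by rwa [pow_add]
    have hB : 3 ^ (5 * (m + h z)) ≤ (3 * m) ^ 5 * (4 ^ m) ^ 5 := by
      calc 3 ^ (5 * (m + h z)) = (3 ^ (m + h z)) ^ 5 := by
            rw [← pow_mul, Nat.mul_comm]
        _ ≤ (3 * m * 4 ^ m) ^ 5 := Nat.pow_le_pow_left hA' 5
        _ = (3 * m) ^ 5 * (4 ^ m) ^ 5 := by rw [mul_pow]
    have hC : 3 ^ (7 * m + 1) ≤ 3 ^ (5 * (m + h z)) :=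
      Nat.pow_le_pow_right (by norm_num) (by omega)
    have hD : 2 ^ m * (4 ^ m) ^ 5 ≤ 3 ^ (7 * m) := by
      calc 2 ^ m * (4 ^ m) ^ 5 = 2 ^ m * 1024 ^ m := by
            rw [← pow_mul, Nat.mul_comm m 5, pow_mul]
            norm_num
        _ = 2048 ^ m := by rw [← mul_pow]; norm_num
        _ ≤ 2187 ^ m := Nat.pow_le_pow_left (by norm_num) m
        _ = 3 ^ (7 * m) := by rw [pow_mul]; norm_num
    have hE' : 2 ^ m * (4 ^ m) ^ 5 ≤ (3 * m) ^ 5 * (4 ^ m) ^ 5 := by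
      calc 2 ^ m * (4 ^ m) ^ 5 ≤ 3 ^ (7 * m) := hD
        _ ≤ 3 ^ (7 * m + 1) := Nat.pow_le_pow_right (by norm_num) (by omega)
        _ ≤ 3 ^ (5 * (m + h z)) := hC
        _ ≤ (3 * m) ^ 5 * (4 ^ m) ^ 5 := hB
    have hF : 2 ^ m ≤ (3 * m) ^ 5 :=
      Nat.le_of_mul_le_mul_right hE' (Nat.pow_pos (by norm_num))
    exact absurd hF (Nat.not_le.mpr (aux_pow m hm100))
  -- the pool Z' and the bipartite graph
  have himgZ : X.image f ⊆ Z := by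
    intro v hv
    obtain ⟨y, hy, rfl⟩ := Finset.mem_image.mp hv
    exact (hfdeg y hy).1
  have himgcard : (X.image f).card = m := by
    rw [Finset.card_image_of_injOn hfinj]
  set Zp := Z \ X.image f with hZp
  have hZpcard : Zp.card = 2 * m := by
    rw [hZp, Finset.card_sdiff_of_subset himgZ, hZ3, himgcard]
    omega
  set tset : V → Finset V := fun x => Zp.filter fun z => ({x, f x, z} : Finset V) ∈ E with htset
  have hdegx : ∀ x ∈ X, 19 * m ≤ 10 * (tset x).card := by
    intro x hxX
    have hsplit : (tset x).card + (Zp.filter fun z => ¬ (({x, f x, z} : Finset V) ∈ E)).card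
        = Zp.card := by
      rw [htset]
      exact Finset.card_filter_add_card_filter_not _
    have hbad : (Zp.filter fun z => ¬ (({x, f x, z} : Finset V) ∈ E)).card ≤ DD E X x (f x) := by
      apply Finset.card_le_card
      intro z hz
      rw [Finset.mem_filter] at hz
      have hzZp := hz.1
      rw [hZp, Finset.mem_sdiff] at hzZp
      rw [Finset.mem_filter]
      refine ⟨Finset.mem_erase.mpr ⟨?_, hzZp.1⟩, hz.2⟩
      rintro rfl
      exact hzZp.2 (Finset.mem_image_of_mem f hxX)
    have h10 := (hfdeg x hxX).2
    omega
  have hdegz : ∀ z ∈ Zp, 11 * m ≤ 20 * ((X.filter fun x => ({x, f x, z} : Finset V) ∈ E).card) := by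
    intro z hzp
    have hzZ : z ∈ Z := (Finset.mem_sdiff.mp hzp).1
    have hznimg : z ∉ X.image f := (Finset.mem_sdiff.mp hzp).2
    have hsplit : (X.filter fun x => ({x, f x, z} : Finset V) ∈ E).card
        + (X.filter fun x => ¬ (({x, f x, z} : Finset V) ∈ E)).card = m :=
      Finset.card_filter_add_card_filter_not _
    have hcsub : (X.filter fun x => ¬ (({x, f x, z} : Finset V) ∈ E)) ⊆
        (X.filter fun x => m < 4 * DD E X x z) ∪
        (X.filter fun y => 4 * DD E X y z ≤ m ∧ f y ≠ z ∧ ({y, f y, z} : Finset V) ∉ E) := by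
      intro y hy
      rw [Finset.mem_filter] at hy
      by_cases hl : 4 * DD E X y z ≤ m
      · refine Finset.mem_union_right _ (Finset.mem_filter.mpr ⟨hy.1, hl, ?_, hy.2⟩)
        intro heq
        exact hznimg (heq ▸ Finset.mem_image_of_mem f hy.1)
      · exact Finset.mem_union_left _ (Finset.mem_filter.mpr ⟨hy.1, by omega⟩)
    have hc : (X.filter fun x => ¬ (({x, f x, z} : Finset V) ∈ E)).card ≤
        (X.filter fun x => m < 4 * DD E X x z).card + h z :=
      le_trans (Finset.card_le_card hcsub) (Finset.card_union_le _ _)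
    have h1 := hheavyZ z hzZ
    have h2 := hh z hzZ
    omega
  -- Hall's theorem
  set t : {y // y ∈ X} × Bool → Finset V := fun p => tset p.1.1 with ht
  have hHall : ∀ s : Finset ({y // y ∈ X} × Bool), s.card ≤ (s.biUnion t).card := by
    intro s
    rcases s.eq_empty_or_nonempty with rfl | hs
    · simp
    by_cases hsize : 10 * s.card ≤ 19 * m
    · obtain ⟨p, hp⟩ := hs
      have hsub : t p ⊆ s.biUnion t := Finset.subset_biUnion_of_mem t hp
      have h1 : 19 * m ≤ 10 * (t p).card := hdegx p.1.1 p.1.2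
      have h2 : (t p).card ≤ (s.biUnion t).card := Finset.card_le_card hsub
      omega
    · push_neg at hsize
      have hcover : Zp ⊆ s.biUnion t := by
        intro z hz
        set proj := s.image fun p => (p.1.1 : V) with hproj
        have hproj1 : s.card ≤ 2 * proj.card := by
          have hle : s.card ≤ (proj ×ˢ (Finset.univ : Finset Bool)).card := by
            apply Finset.card_le_card_of_injOn (fun p => ((p.1.1 : V), p.2))
            · intro p hp
              exact Finset.mem_product.mpr
                ⟨Finset.mem_image_of_mem _ hp, Finset.mem_univ _⟩
            · rintro ⟨⟨a, ha⟩, i⟩ - ⟨⟨b, hb⟩, j⟩ - heq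
              simp only [Prod.mk.injEq] at heq
              exact Prod.ext (Subtype.ext heq.1) heq.2
          rw [Finset.card_product, Finset.card_univ, Fintype.card_bool] at hle
          omega
        have hprojX : proj ⊆ X := by
          intro v hv
          obtain ⟨p, hp, rfl⟩ := Finset.mem_image.mp hv
          exact p.1.2
        have hgood := hdegz z hz
        have hu : ((X.filter fun x => ({x, f x, z} : Finset V) ∈ E) ∪ proj).card ≤ m :=
          Finset.card_le_card (Finset.union_subset (Finset.filter_subset _ _) hprojX)
        have hui := Finset.card_union_add_card_inter
          (X.filter fun x => ({x, f x, z} : Finset V) ∈ E) proj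
        have hint : 0 < ((X.filter fun x => ({x, f x, z} : Finset V) ∈ E) ∩ proj).card := by
          omega
        obtain ⟨x, hx⟩ := Finset.card_pos.mp hint
        rw [Finset.mem_inter] at hx
        obtain ⟨p, hps, hpx⟩ := Finset.mem_image.mp hx.2
        refine Finset.mem_biUnion.mpr ⟨p, hps, ?_⟩
        rw [ht]
        show z ∈ tset p.1.1
        rw [htset, Finset.mem_filter]
        refine ⟨hz, ?_⟩
        rw [hpx]
        exact (Finset.mem_filter.mp hx.1).2
      have h1 : 2 * m ≤ (s.biUnion t).card := by
        calc 2 * m = Zp.card := hZpcard.symm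
          _ ≤ _ := Finset.card_le_card hcover
      have h2 : s.card ≤ 2 * m := by
        have hle := Finset.card_le_univ s
        rw [Fintype.card_prod, Fintype.card_coe, Fintype.card_bool] at hle
        omega
      omega
  obtain ⟨g, hginj, hgmem⟩ := (Finset.all_card_le_biUnion_card_iff_exists_injective t).mp hHall
  have hgZp : ∀ p, g p ∈ Zp := fun p => (Finset.mem_filter.mp (hgmem p)).1
  have hgE : ∀ p, ({p.1.1, f p.1.1, g p} : Finset V) ∈ E :=
    fun p => (Finset.mem_filter.mp (hgmem p)).2
  have hgsurj : ∀ v ∈ Zp, ∃ p, g p = v := by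
    intro v hv
    have himg2 : Finset.univ.image g = Zp := by
      apply Finset.eq_of_subset_of_card_le
      · intro w hw
        obtain ⟨p, -, rfl⟩ := Finset.mem_image.mp hw
        exact hgZp p
      · rw [Finset.card_image_of_injective _ hginj, Finset.card_univ, hZpcard,
          Fintype.card_prod, Fintype.card_coe, Fintype.card_bool]
        omega
    rw [← himg2] at hv
    obtain ⟨p, -, hp⟩ := Finset.mem_image.mp hv
    exact ⟨p, hp⟩
  -- tiles
  set tile : {y // y ∈ X} → Finset V :=
    fun x => {x.1, f x.1, g (x, false), g (x, true)} with htile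
  have hfX : ∀ y : {y // y ∈ X}, f y.1 ∉ X := fun y => Finset.mem_compl.mp (hfdeg y.1 y.2).1
  have hgX : ∀ p, g p ∉ X := by
    intro p
    have hzp := hgZp p
    rw [hZp, Finset.mem_sdiff] at hzp
    exact Finset.mem_compl.mp hzp.1
  have hgim : ∀ p (y : {y // y ∈ X}), g p ≠ f y.1 := by
    intro p y he
    have hzp := hgZp p
    rw [hZp, Finset.mem_sdiff] at hzp
    exact hzp.2 (he ▸ Finset.mem_image_of_mem f y.2)
  have hginj' : ∀ (a b : {y // y ∈ X}) (i j : Bool), g (a, i) = g (b, j) → a = b := by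
    intro a b i j he
    have := hginj he
    exact congrArg Prod.fst this
  have key2 : ∀ (x1 x2 : {y // y ∈ X}), x1 ≠ x2 → ∀ v, v ∈ tile x1 → v ∈ tile x2 → False := by
    intro x1 x2 hx12 v hv1 hv2
    have hval : x1.1 ≠ x2.1 := fun hval => hx12 (Subtype.ext hval)
    rw [htile] at hv1 hv2
    simp only [Finset.mem_insert, Finset.mem_singleton] at hv1 hv2
    rcases hv1 with rfl | rfl | rfl | rfl
    · rcases hv2 with hv | hv | hv | hv
      · exact hval hv
      · exact hfX x2 (by rw [← hv]; exact x1.2)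
      · exact hgX (x2, false) (by rw [← hv]; exact x1.2)
      · exact hgX (x2, true) (by rw [← hv]; exact x1.2)
    · rcases hv2 with hv | hv | hv | hv
      · exact hfX x1 (by rw [hv]; exact x2.2)
      · exact hval (hfinj x1.2 x2.2 hv)
      · exact hgim (x2, false) x1 hv.symm
      · exact hgim (x2, true) x1 hv.symm
    · rcases hv2 with hv | hv | hv | hv
      · exact hgX (x1, false) (by rw [hv]; exact x2.2)
      · exact hgim (x1, false) x2 hv
      · exact hx12 (hginj' _ _ _ _ hv)
      · exact hx12 (hginj' _ _ _ _ hv)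
    · rcases hv2 with hv | hv | hv | hv
      · exact hgX (x1, true) (by rw [hv]; exact x2.2)
      · exact hgim (x1, true) x2 hv
      · exact hx12 (hginj' _ _ _ _ hv)
      · exact hx12 (hginj' _ _ _ _ hv)
  refine ⟨Finset.univ.image tile, ?_, ?_, ?_⟩
  · intro tl htl
    obtain ⟨x, -, rfl⟩ := Finset.mem_image.mp htl
    have hd1 : f x.1 ≠ x.1 := fun he => hfX x (by rw [he]; exact x.2)
    have hgnex : ∀ b, g (x, b) ≠ x.1 := fun b he => hgX (x, b) (by rw [he]; exact x.2)
    have hgnif : ∀ b, g (x, b) ≠ f x.1 := fun b => hgim (x, b) x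
    have hgne : g (x, false) ≠ g (x, true) := by
      intro he
      have := hginj he
      simp at this
    constructor
    · rw [htile]
      rw [Finset.card_insert_of_notMem, Finset.card_insert_of_notMem,
        Finset.card_insert_of_notMem, Finset.card_singleton]
      · simp only [Finset.mem_singleton]
        exact hgne
      · simp only [Finset.mem_insert, Finset.mem_singleton]
        push_neg
        exact ⟨fun he => hgnif false he.symm, fun he => hgnif true he.symm⟩
      · simp only [Finset.mem_insert, Finset.mem_singleton]
        push_neg
        exact ⟨Ne.symm hd1, fun he => hgnex false he.symm, fun he => hgnex true he.symm⟩
    · refine ⟨{x.1, f x.1, g (x, false)}, hgE (x, false),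
        {x.1, f x.1, g (x, true)}, hgE (x, true), ?_, ?_, ?_⟩
      · intro he
        have hmem : g (x, false) ∈ ({x.1, f x.1, g (x, true)} : Finset V) := by
          rw [← he]; simp
        simp only [Finset.mem_insert, Finset.mem_singleton] at hmem
        rcases hmem with hv | hv | hv
        · exact hgnex false hv
        · exact hgnif false hv
        · exact hgne hv
      · intro v hv
        rw [htile]
        simp only [Finset.mem_insert, Finset.mem_singleton] at hv ⊢
        tauto
      · intro v hv
        rw [htile]
        simp only [Finset.mem_insert, Finset.mem_singleton] at hv ⊢
        tauto
  · intro t1 ht1 t2 ht2 hne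
    rw [Finset.mem_coe] at ht1 ht2
    obtain ⟨x1, -, rfl⟩ := Finset.mem_image.mp ht1
    obtain ⟨x2, -, rfl⟩ := Finset.mem_image.mp ht2
    have hx12 : x1 ≠ x2 := fun he => hne (by rw [he])
    have hdj : Disjoint (tile x1) (tile x2) := by
      rw [Finset.disjoint_left]
      intro v hv1 hv2
      exact key2 x1 x2 hx12 v hv1 hv2
    exact hdj
  · intro v
    by_cases hvX : v ∈ X
    · refine ⟨tile ⟨v, hvX⟩, Finset.mem_image_of_mem _ (Finset.mem_univ _), ?_⟩
      rw [htile]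
      simp
    · have hvZ : v ∈ Z := Finset.mem_compl.mpr hvX
      by_cases hvim : v ∈ X.image f
      · obtain ⟨y, hy, hyv⟩ := Finset.mem_image.mp hvim
        refine ⟨tile ⟨y, hy⟩, Finset.mem_image_of_mem _ (Finset.mem_univ _), ?_⟩
        rw [htile, ← hyv]
        simp
      · have hvZp : v ∈ Zp := Finset.mem_sdiff.mpr ⟨hvZ, hvim⟩
        obtain ⟨⟨x, b⟩, hp⟩ := hgsurj v hvZp
        refine ⟨tile x, Finset.mem_image_of_mem _ (Finset.mem_univ _), ?_⟩
        rw [htile, ← hp]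
        cases b
        · simp
        · simp
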